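/- arXiv:1905.07699 — 4 statements merged into one kernel-verified Lean document; each statement's English description precedes it below -/
import Mathlib

section
/- (Combinatorial core of the Tree Distance Lemma.) Let N ≥ 1, identify the vertices of the N-dimensional hypercube with functions Fin N → Bool, and let T : (Fin N → Bool) → ℕ be any function. Fix a vertex u and an integer k with 1 ≤ k ≤ N. If the number of vertices x satisfying T(x) ≤ 2^k is strictly greater than 2^(k−1), then there exists a vertex v such that d_Tree(u,v) ≥ ⌈log₂ T(v)⌉ (where ⌈log₂ m⌉ denotes Nat.clog 2 m). -/
/-- The length of the longest common prefix of two vertices of the `N`-dimensional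
hypercube: the largest `j ≤ N` such that `u i = v i` for all `i < j`. -/
def lcp {N : ℕ} (u v : Fin N → Bool) : ℕ :=
  Nat.findGreatest (fun j => ∀ i : Fin N, (i : ℕ) < j → u i = v i) N

/-- The tree distance between two vertices of the hypercube. -/
def treeDist {N : ℕ} (u v : Fin N → Bool) : ℕ := N - lcp u v

lemma lcp_spec {N : ℕ} (u v : Fin N → Bool) :
    ∀ i : Fin N, (i : ℕ) < lcp u v → u i = v i :=
  Nat.findGreatest_spec (P := fun j => ∀ i : Fin N, (i : ℕ) < j → u i = v i)
    (m := 0) (Nat.zero_le N) (fun i hi => absurd hi (by omega))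

theorem stmt_2 (N : ℕ) (hN : 1 ≤ N) (T : (Fin N → Bool) → ℕ) (u : Fin N → Bool)
    (k : ℕ) (hk1 : 1 ≤ k) (hkN : k ≤ N)
    (hcard : 2 ^ (k - 1) < (Finset.univ.filter (fun x : Fin N → Bool => T x ≤ 2 ^ k)).card) :
    ∃ v : Fin N → Bool, Nat.clog 2 (T v) ≤ treeDist u v := by
  by_contra hcon
  push_neg at hcon
  -- every x in the filter set agrees with u on the first N-k+1 coordinates
  set A : Finset (Fin N → Bool) :=
    Finset.univ.filter (fun x : Fin N → Bool => T x ≤ 2 ^ k) with hA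
  set S : Finset (Fin N → Bool) :=
    Finset.univ.filter (fun x : Fin N → Bool => ∀ i : Fin N, (i : ℕ) < N - k + 1 → x i = u i)
    with hS
  have hAS : A ⊆ S := by
    intro x hx
    simp only [hA, Finset.mem_filter, Finset.mem_univ, true_and] at hx
    have hclog : Nat.clog 2 (T x) ≤ k := (Nat.clog_le_iff_le_pow (by norm_num)).2 hx
    have htd : treeDist u x < Nat.clog 2 (T x) := hcon x
    have hlcp_le : lcp u x ≤ N := Nat.findGreatest_le N
    have hlcp : N - k + 1 ≤ lcp u x := by
      have : treeDist u x < k := lt_of_lt_of_le htd hclog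
      unfold treeDist at this; omega
    simp only [hS, Finset.mem_filter, Finset.mem_univ, true_and]
    intro i hi
    exact (lcp_spec u x i (lt_of_lt_of_le hi hlcp)).symm
  -- S has cardinality at most 2^(k-1): restriction to the last k-1 coords is injective on S
  have hSle : S.card ≤ 2 ^ (k - 1) := by
    have := Finset.card_le_card_of_injOn
      (f := fun (x : Fin N → Bool) (j : Fin (k - 1)) =>
        x ⟨N - k + 1 + (j : ℕ), by omega⟩)
      (s := S) (t := (Finset.univ : Finset (Fin (k - 1) → Bool)))
      (fun _ _ => Finset.mem_univ _)
      (by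
        intro x hx y hy hxy
        simp only [hS, Finset.mem_coe, Finset.mem_filter, Finset.mem_univ, true_and] at hx hy
        funext i
        by_cases hi : (i : ℕ) < N - k + 1
        · rw [hx i hi, hy i hi]
        · have hj : (i : ℕ) - (N - k + 1) < k - 1 := by omega
          have := congrFun hxy ⟨(i : ℕ) - (N - k + 1), hj⟩
          simp only at this
          have hieq : (⟨N - k + 1 + ((i : ℕ) - (N - k + 1)), by omega⟩ : Fin N) = i := by
            ext; simp; omega
          rwa [hieq] at this)
    simpa using this
  have := Finset.card_le_card hAS
  omega
end

section
/- For all natural numbers N and k with 2k ≤ N, the partial sum of binomial coefficients satisfies ∑_{i=0}^{k} (N choose i) ≤ (N choose k) · (N − (k−1)) / (N − (2k−1)), where the right-hand side is computed over the real numbers (note N − (2k−1) = N − 2k + 1 ≥ 1 under the hypothesis). -/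
theorem stmt_4 (N k : ℕ) (h : 2 * k ≤ N) :
    (∑ i ∈ Finset.range (k + 1), (N.choose i : ℝ)) ≤
      (N.choose k : ℝ) * ((N : ℝ) - ((k : ℝ) - 1)) / ((N : ℝ) - (2 * (k : ℝ) - 1)) := by
  have hkN : (2 * k : ℝ) ≤ N := by exact_mod_cast h
  set r : ℝ := k / ((N : ℝ) - k + 1) with hrdef
  have hden : (0:ℝ) < (N:ℝ) - k + 1 := by linarith
  have hr0 : 0 ≤ r := by positivity
  have hr1 : r < 1 := by
    rw [hrdef, div_lt_one hden]; linarith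
  have key : ∀ j ≤ k, (N.choose (k - j) : ℝ) ≤ (N.choose k : ℝ) * r ^ j := by
    intro j hj
    induction j with
    | zero => simp
    | succ j ih =>
      have hj' : j ≤ k := by omega
      have ihh := ih hj'
      set i := k - (j + 1) with hidef
      have hik : i + 1 = k - j := by omega
      have hiN : (i : ℝ) + 1 ≤ k := by
        have : i + 1 ≤ k := by omega
        exact_mod_cast this
      have hidlt : (i:ℝ) < N := by linarith
      have hident : ((N:ℝ) - i) * (N.choose i : ℝ) = ((i:ℝ) + 1) * (N.choose (i+1) : ℝ) := by
        have := Nat.choose_succ_right_eq N i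
        have h2 : (N.choose (i+1) : ℝ) * ((i:ℝ)+1) = (N.choose i : ℝ) * ((N:ℝ) - i) := by
          have hiN' : i ≤ N := by exact_mod_cast hidlt.le
          push_cast [← Nat.cast_sub hiN']
          exact_mod_cast this
        linarith
      have step : (N.choose i : ℝ) ≤ (N.choose (i+1) : ℝ) * r := by
        have hNi : (0:ℝ) < (N:ℝ) - i := by linarith
        have hratio : ((i:ℝ)+1) * ((N:ℝ) - k + 1) ≤ (k:ℝ) * ((N:ℝ) - i) := by nlinarith
        have hch2 : (0:ℝ) ≤ (N.choose (i+1) : ℝ) := by positivity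
        have hc1 : (0:ℝ) ≤ (N.choose i : ℝ) := by positivity
        have hmul := mul_le_mul_of_nonneg_left hratio hch2
        rw [hrdef, ← mul_div_assoc, le_div_iff₀ hden]
        nlinarith [hc1, hmul, hident, hNi]
      calc (N.choose (k - (j+1)) : ℝ) = (N.choose i : ℝ) := rfl
        _ ≤ (N.choose (i+1) : ℝ) * r := step
        _ = (N.choose (k - j) : ℝ) * r := by rw [hik]
        _ ≤ (N.choose k : ℝ) * r ^ j * r := by
            apply mul_le_mul_of_nonneg_right ihh hr0
        _ = (N.choose k : ℝ) * r ^ (j+1) := by ring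
  have hsum : (∑ i ∈ Finset.range (k + 1), (N.choose i : ℝ)) =
      ∑ j ∈ Finset.range (k + 1), (N.choose (k - j) : ℝ) := by
    rw [← Finset.sum_range_reflect]
    apply Finset.sum_congr rfl
    intro j hj
    congr 1
  rw [hsum]
  have hbound : (∑ j ∈ Finset.range (k + 1), (N.choose (k - j) : ℝ)) ≤
      (N.choose k : ℝ) * ∑ j ∈ Finset.range (k + 1), r ^ j := by
    rw [Finset.mul_sum]
    apply Finset.sum_le_sum
    intro j hj
    exact key j (by simpa [Nat.lt_succ_iff] using hj)
  refine hbound.trans ?_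
  have h1r : (0:ℝ) < 1 - r := by linarith
  have hgeom : (∑ j ∈ Finset.range (k + 1), r ^ j) ≤ 1 / (1 - r) := by
    have heq : (r ^ (k+1) - 1)/(r - 1) = (1 - r ^ (k+1))/(1 - r) := by
      rw [← neg_div_neg_eq]; ring_nf
    have hp : (0:ℝ) ≤ r ^ (k+1) := by positivity
    rw [geom_sum_eq (ne_of_lt hr1), heq, div_le_div_iff₀ h1r h1r]
    nlinarith
  have hch : (0:ℝ) ≤ (N.choose k : ℝ) := by positivity
  calc (N.choose k : ℝ) * ∑ j ∈ Finset.range (k + 1), r ^ j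
      ≤ (N.choose k : ℝ) * (1 / (1 - r)) := by
        apply mul_le_mul_of_nonneg_left hgeom hch
    _ = (N.choose k : ℝ) * ((N : ℝ) - ((k : ℝ) - 1)) / ((N : ℝ) - (2 * (k : ℝ) - 1)) := by
        have h2 : (0:ℝ) < (N:ℝ) - (2*(k:ℝ) - 1) := by linarith
        have h3 : 1 - r = ((N:ℝ) - (2*(k:ℝ) - 1)) / ((N:ℝ) - k + 1) := by
          rw [hrdef]; field_simp; ring
        rw [h3, one_div_div, mul_div_assoc]
        congr 1
        ring
end

section
/- For all natural numbers N and k with 1 ≤ k and 4k ≤ N, the partial sum of binomial coefficients satisfies ∑_{i=0}^{k} (N choose i) ≤ (3/2) · (N choose k), where the inequality is between real numbers. -/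
theorem stmt_5 (N k : ℕ) (hk1 : 1 ≤ k) (h : 4 * k ≤ N) :
    (∑ i ∈ Finset.range (k + 1), (N.choose i : ℝ)) ≤ (3 / 2) * (N.choose k : ℝ) := by
  -- Step 1: for i+1 ≤ k, 3 * C(N,i) ≤ C(N,i+1)
  have step : ∀ i, i + 1 ≤ k → 3 * N.choose i ≤ N.choose (i + 1) := by
    intro i hi
    have key : N.choose (i + 1) * (i + 1) = N.choose i * (N - i) :=
      Nat.choose_succ_right_eq N i
    have hNi : 3 * (i + 1) ≤ N - i := by omega
    have : 3 * N.choose i * (i + 1) ≤ N.choose (i + 1) * (i + 1) := by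
      rw [key]
      calc 3 * N.choose i * (i + 1) = N.choose i * (3 * (i + 1)) := by ring
        _ ≤ N.choose i * (N - i) := Nat.mul_le_mul_left _ hNi
    exact Nat.le_of_mul_le_mul_right this (Nat.succ_pos i)
  -- Step 2: C(N,i) * 3^(k-i) ≤ C(N,k)
  have pow : ∀ d i, i + d = k → N.choose i * 3 ^ d ≤ N.choose k := by
    intro d
    induction d with
    | zero => intro i hi; simp [← hi]
    | succ n ih =>
      intro i hi
      have h1 : 3 * N.choose i ≤ N.choose (i + 1) := step i (by omega)
      calc N.choose i * 3 ^ (n + 1) = (3 * N.choose i) * 3 ^ n := by ring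
        _ ≤ N.choose (i + 1) * 3 ^ n := Nat.mul_le_mul_right _ h1
        _ ≤ N.choose k := ih (i + 1) (by omega)
  have bound : ∀ i ∈ Finset.range (k + 1),
      (N.choose i : ℝ) ≤ (N.choose k : ℝ) * (1 / 3) ^ (k - i) := by
    intro i hi
    rw [Finset.mem_range] at hi
    have hik : i ≤ k := by omega
    have := pow (k - i) i (by omega)
    have h3 : (0:ℝ) < 3 ^ (k - i) := by positivity
    rw [div_pow, one_pow, mul_one_div, le_div_iff₀ h3]
    calc (N.choose i : ℝ) * 3 ^ (k - i) = ((N.choose i * 3 ^ (k - i) : ℕ) : ℝ) := by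
          push_cast; ring
      _ ≤ (N.choose k : ℝ) := by exact_mod_cast this
  calc (∑ i ∈ Finset.range (k + 1), (N.choose i : ℝ))
      ≤ ∑ i ∈ Finset.range (k + 1), (N.choose k : ℝ) * (1 / 3) ^ (k - i) :=
        Finset.sum_le_sum bound
    _ = (N.choose k : ℝ) * ∑ i ∈ Finset.range (k + 1), (1 / 3 : ℝ) ^ (k - i) := by
        rw [Finset.mul_sum]
    _ = (N.choose k : ℝ) * ∑ j ∈ Finset.range (k + 1), (1 / 3 : ℝ) ^ j := by
        congr 1
        rw [← Finset.sum_range_reflect]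
        apply Finset.sum_congr rfl
        intro j hj
        rw [Finset.mem_range] at hj
        congr 1
        omega
    _ ≤ (3 / 2) * (N.choose k : ℝ) := by
        have hg := geom_sum_eq (by norm_num : (1 / 3 : ℝ) ≠ 1) (k + 1)
        have hp : (0:ℝ) ≤ (1/3:ℝ) ^ (k + 1) := by positivity
        have hc : (0:ℝ) ≤ (N.choose k : ℝ) := Nat.cast_nonneg _
        have : ((1 / 3:ℝ) ^ (k + 1) - 1) / (1 / 3 - 1) ≤ 3 / 2 := by
          rw [div_le_iff_of_neg (by norm_num : (1/3:ℝ) - 1 < 0)]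
          nlinarith
        rw [hg]
        nlinarith [mul_nonneg hc hp]
end

section
/- (Combinatorial core of the Working Set Lemma.) Let N ≥ 1, identify the vertices of the N-dimensional hypercube with functions Fin N → Bool, let u be a vertex, let m ≥ 1 be a natural number, and let S be a finite set of vertices with |S| ≥ 2^m. Then there exists a vertex v ∈ S whose Hamming distance from u satisfies hammingDist(u,v) ≥ m / (6 + log₂ N), where log₂ denotes the real base-2 logarithm. -/
theorem stmt_11 (N : ℕ) (hN : 1 ≤ N) (u : Fin N → Bool) (m : ℕ) (hm : 1 ≤ m)
    (S : Finset (Fin N → Bool)) (hS : 2 ^ m ≤ S.card) :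
    ∃ v ∈ S, (m : ℝ) / (6 + Real.logb 2 N) ≤ (hammingDist u v : ℝ) := by
  by_contra hcon
  push_neg at hcon
  set L : ℝ := Real.logb 2 N with hLdef
  have hL : 0 ≤ L := Real.logb_nonneg one_lt_two (by exact_mod_cast hN)
  have hden : (0:ℝ) < 6 + L := by linarith
  set t : ℝ := (m : ℝ) / (6 + L) with htdef
  have htpos : 0 < t := div_pos (by exact_mod_cast hm) hden
  set r : ℕ := ⌊t⌋₊ with hrdef
  have hrt : (r : ℝ) ≤ t := Nat.floor_le htpos.le
  have hball : ∀ v ∈ S, hammingDist u v ≤ r := fun v hv =>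
    Nat.le_floor (le_of_lt (hcon v hv))
  have hcard : S.card ≤ ∑ i ∈ Finset.range (r+1), N.choose i := by
    have hinj : S.card ≤ ((Finset.range (r+1)).biUnion
        (fun i => Finset.powersetCard i (Finset.univ : Finset (Fin N)))).card := by
      apply Finset.card_le_card_of_injOn
        (fun v => Finset.univ.filter (fun i => u i ≠ v i))
      · intro v hv
        simp only [Finset.mem_coe, Finset.mem_biUnion, Finset.mem_range, Finset.mem_powersetCard]
        exact ⟨hammingDist u v, Nat.lt_succ_of_le (hball v hv),
          Finset.filter_subset _ _, rfl⟩
      · intro v _ w _ h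
        funext i
        have := Finset.ext_iff.mp h i
        simp only [Finset.mem_filter, Finset.mem_univ, true_and] at this
        cases hu : u i <;> cases hv2 : v i <;> cases hw2 : w i <;> simp_all
    calc S.card ≤ _ := hinj
      _ ≤ ∑ i ∈ Finset.range (r+1),
            (Finset.powersetCard i (Finset.univ : Finset (Fin N))).card :=
        Finset.card_biUnion_le
      _ = ∑ i ∈ Finset.range (r+1), N.choose i := by
        simp [Finset.card_powersetCard]
  have hchoose : ∑ i ∈ Finset.range (r+1), N.choose i ≤ (2*N)^r := by
    calc ∑ i ∈ Finset.range (r+1), N.choose i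
        ≤ ∑ _i ∈ Finset.range (r+1), N^r := by
          apply Finset.sum_le_sum
          intro i hi
          exact le_trans (Nat.choose_le_pow N i)
            (Nat.pow_le_pow_right hN (Nat.lt_succ_iff.mp (Finset.mem_range.mp hi)))
      _ = (r+1) * N^r := by simp [mul_comm]
      _ ≤ 2^r * N^r := Nat.mul_le_mul_right _ Nat.lt_two_pow_self
      _ = (2*N)^r := (mul_pow 2 N r).symm
  -- real inequality
  have hNpos : (0:ℝ) < N := by exact_mod_cast hN
  have h2N : ((2*N : ℕ) : ℝ) = (2:ℝ) ^ (1 + L) := by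
    rw [Real.rpow_add two_pos, Real.rpow_one, hLdef, Real.rpow_logb two_pos (by norm_num) hNpos]
    push_cast; ring
  have hexp : (1 + L) * r < m := by
    have htm : t * (6 + L) = m := div_mul_cancel₀ _ hden.ne'
    nlinarith [hrt, htpos, hL]
  have hreal : (((2*N)^r : ℕ) : ℝ) < 2 ^ m := by
    push_cast
    rw [show ((2:ℝ)*N)^r = ((2*N:ℕ):ℝ)^r by push_cast; ring, h2N,
      ← Real.rpow_natCast ((2:ℝ)^(1+L)) r, ← Real.rpow_mul (by positivity),
      show ((2:ℝ)^m : ℝ) = (2:ℝ) ^ (m:ℝ) by rw [Real.rpow_natCast]]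
    exact Real.rpow_lt_rpow_of_exponent_lt one_lt_two hexp
  have : ((2^m : ℕ) : ℝ) ≤ (((2*N)^r : ℕ) : ℝ) := by
    exact_mod_cast le_trans hS (le_trans hcard hchoose)
  have h2m : ((2^m : ℕ) : ℝ) = (2:ℝ)^m := by push_cast; ring
  linarith [h2m ▸ this]
end
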